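/- Let B ∈ F₂^{κ×ν} and ℓ ≥ 1, and let A ∈ F₂^{ℓκ × (ℓ+1)ν} be the block matrix whose (i,i) block is B and whose (i, i+1) block is B̄ for i = 1, …, ℓ, with all other blocks zero. If every nonzero vector x ∈ F₂^κ satisfies wt(x·B) ≥ d, then every nonzero vector y ∈ F₂^{ℓκ} satisfies wt(y·A) ≥ d. In particular, if d ≥ 1 (equivalently, if x ↦ x·B is injective), then y ↦ y·A is injective, so the code generated by A has exactly 2^{ℓκ} codewords. -/

import Mathlib

/-- **The staircase block matrix preserves the minimum distance.**
Let `B ∈ F₂^{κ×ν}` and `ℓ ≥ 1`, and let `A ∈ F₂^{ℓκ×(ℓ+1)ν}` be the block matrix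
(rows indexed by `Fin ℓ × Fin κ`, columns by `Fin (ℓ+1) × Fin ν`) whose `(i,i)` block is
`B` and whose `(i,i+1)` block is the bitwise complement `B̄`, all other blocks being zero.
If every nonzero `x ∈ F₂^κ` satisfies `wt(x·B) ≥ d`, then every nonzero `y ∈ F₂^{ℓκ}`
satisfies `wt(y·A) ≥ d`.  In particular, if `d ≥ 1` then `y ↦ y·A` is injective, so the
code generated by `A` has exactly `2^{ℓκ}` codewords. -/
theorem block_matrix_min_distance (κ ν ℓ d : ℕ) (hℓ : 1 ≤ ℓ)
    (B : Matrix (Fin κ) (Fin ν) (ZMod 2))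
    (A : Matrix (Fin ℓ × Fin κ) (Fin (ℓ + 1) × Fin ν) (ZMod 2))
    (hA : ∀ p q, A p q =
      if (q.1 : ℕ) = (p.1 : ℕ) then B p.2 q.2
      else if (q.1 : ℕ) = (p.1 : ℕ) + 1 then B p.2 q.2 + 1 else 0)
    (hB : ∀ x : Fin κ → ZMod 2, x ≠ 0 →
      d ≤ hammingDist (Matrix.vecMul x B) (0 : Fin ν → ZMod 2)) :
    (∀ y : Fin ℓ × Fin κ → ZMod 2, y ≠ 0 →
      d ≤ hammingDist (Matrix.vecMul y A) (0 : Fin (ℓ + 1) × Fin ν → ZMod 2)) ∧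
    (1 ≤ d →
      Function.Injective (fun y : Fin ℓ × Fin κ → ZMod 2 => Matrix.vecMul y A) ∧
      (Finset.univ.image (fun y : Fin ℓ × Fin κ → ZMod 2 => Matrix.vecMul y A)).card =
        2 ^ (ℓ * κ)) := by
  have key : ∀ y : Fin ℓ × Fin κ → ZMod 2, y ≠ 0 →
      d ≤ hammingDist (Matrix.vecMul y A) (0 : Fin (ℓ + 1) × Fin ν → ZMod 2) := by
    intro y hy
    have hS : (Finset.univ.filter fun i : Fin ℓ => ∃ k, y (i, k) ≠ 0).Nonempty := by
      by_contra h
      rw [Finset.not_nonempty_iff_eq_empty, Finset.filter_eq_empty_iff] at h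
      apply hy
      funext p
      have := h (Finset.mem_univ p.1)
      push_neg at this
      simpa using this p.2
    set S := Finset.univ.filter fun i : Fin ℓ => ∃ k, y (i, k) ≠ 0 with hSdef
    set i0 := S.min' hS with hi0
    have hi0S : i0 ∈ S := S.min'_mem hS
    have hi0ex : ∃ k, y (i0, k) ≠ 0 := by
      simpa [hSdef] using hi0S
    have hlt : ∀ i : Fin ℓ, (i : ℕ) < (i0 : ℕ) → ∀ k, y (i, k) = 0 := by
      intro i hilt k
      by_contra hk
      have : i ∈ S := by simp [hSdef]; exact ⟨k, hk⟩
      have := S.min'_le i this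
      omega
    set x : Fin κ → ZMod 2 := fun k => y (i0, k) with hx
    have hxne : x ≠ 0 := by
      obtain ⟨k, hk⟩ := hi0ex
      intro h
      exact hk (congrFun h k)
    have hj0 : (i0 : ℕ) < ℓ + 1 := Nat.lt_succ_of_lt i0.isLt
    set j0 : Fin (ℓ + 1) := ⟨i0, hj0⟩ with hj0def
    have hcol : ∀ n : Fin ν, Matrix.vecMul y A (j0, n) = Matrix.vecMul x B n := by
      intro n
      simp only [Matrix.vecMul, dotProduct]
      rw [Fintype.sum_prod_type]
      rw [Finset.sum_eq_single i0]
      · apply Finset.sum_congr rfl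
        intro k _
        rw [hA]
        simp [hj0def, hx]
      · intro i _ hne
        apply Finset.sum_eq_zero
        intro k _
        rw [hA]
        simp only [hj0def]
        by_cases h1 : (i0 : ℕ) = (i : ℕ)
        · exact absurd (Fin.ext h1.symm) hne
        · by_cases h2 : (i0 : ℕ) = (i : ℕ) + 1
          · have : (i : ℕ) < (i0 : ℕ) := by omega
            simp [hlt i this k, h1, h2]
          · simp [h1, h2]
      · intro h
        exact absurd (Finset.mem_univ i0) h
    have hdx := hB x hxne
    rw [hammingDist_zero_right] at hdx ⊢
    refine le_trans hdx ?_
    unfold hammingNorm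
    apply Finset.card_le_card_of_injOn (fun n => (j0, n))
    · intro n hn
      simp only [Finset.mem_coe, Finset.mem_filter, Finset.mem_univ, true_and] at hn ⊢
      rw [hcol n]; exact hn
    · intro a _ b _ hab
      simpa using hab
  refine ⟨key, fun hd => ?_⟩
  have hinj : Function.Injective (fun y : Fin ℓ × Fin κ → ZMod 2 => Matrix.vecMul y A) := by
    intro y₁ y₂ h
    by_contra hne
    have hsub : y₁ - y₂ ≠ 0 := sub_ne_zero_of_ne hne
    have := key (y₁ - y₂) hsub
    rw [Matrix.sub_vecMul] at this
    simp only at h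
    rw [h, sub_self, hammingDist_self] at this
    omega
  refine ⟨hinj, ?_⟩
  rw [Finset.card_image_of_injective _ hinj, Finset.card_univ]
  rw [Fintype.card_fun]
  simp [Fintype.card_prod]
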